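/- Let X be a Banach space, let 𝓙 ⊆ 𝓛(X) be a two-sided ideal of the ring 𝓛(X), and let P ∈ 𝓛(X) be a bounded linear projection (P² = P) whose range E is a closed subspace of X. Suppose there is an isomorphism Φ from X onto E with ‖Φ‖·‖Φ⁻¹‖ ≤ C, and suppose 𝓙 contains an operator T with ‖T − P‖ < (C‖P‖)⁻¹. Then 𝓙 = 𝓛(X). -/

import Mathlib

noncomputable section

set_option maxHeartbeats 1000000

/-- If a two-sided ideal `𝓙` of `𝓛(X)` contains an operator `T` with `‖T − P‖ < (C‖P‖)⁻¹`,
where `P` is a bounded projection whose range is `C`-isomorphic to `X`, then `𝓙 = 𝓛(X)`. -/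
theorem twoSidedIdeal_eq_top_of_near_projection
    (X : Type*) [NormedAddCommGroup X] [NormedSpace ℂ X] [CompleteSpace X]
    (𝓙 : TwoSidedIdeal (X →L[ℂ] X))
    (P : X →L[ℂ] X) (hproj : P ∘L P = P)
    (hclosed : IsClosed (LinearMap.range (P : X →ₗ[ℂ] X) : Set X))
    (C : ℝ)
    (Φ : X ≃L[ℂ] LinearMap.range (P : X →ₗ[ℂ] X))
    (hC : ‖(Φ : X →L[ℂ] LinearMap.range (P : X →ₗ[ℂ] X))‖ * ‖(Φ.symm : LinearMap.range (P : X →ₗ[ℂ] X) →L[ℂ] X)‖ ≤ C)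
    (T : X →L[ℂ] X) (hTJ : T ∈ 𝓙)
    (hTP : ‖T - P‖ < (C * ‖P‖)⁻¹) :
    𝓙 = ⊤ := by
  -- positivity of C * ‖P‖
  have hCP : 0 < C * ‖P‖ := by
    by_contra h
    push_neg at h
    have : (C * ‖P‖)⁻¹ ≤ 0 := inv_nonpos.2 h
    exact absurd (lt_of_lt_of_le hTP this) (not_lt.2 (norm_nonneg _))
  -- the inclusion and corestriction
  set ι : (LinearMap.range (P : X →ₗ[ℂ] X)) →L[ℂ] X := Submodule.subtypeL (LinearMap.range (P : X →ₗ[ℂ] X)) with hι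
  set P' : X →L[ℂ] (LinearMap.range (P : X →ₗ[ℂ] X)) := P.codRestrict (LinearMap.range (P : X →ₗ[ℂ] X)) (fun x => LinearMap.mem_range_self _ x) with hP'
  have hιnorm : ‖ι‖ ≤ 1 := Submodule.norm_subtypeL_le (LinearMap.range (P : X →ₗ[ℂ] X))
  have hP'norm : ‖P'‖ ≤ ‖P‖ := by
    refine ContinuousLinearMap.opNorm_le_bound _ (norm_nonneg P) fun x => ?_
    exact P.le_opNorm x
  set A : X →L[ℂ] X :=
    (Φ.symm : (LinearMap.range (P : X →ₗ[ℂ] X)) →L[ℂ] X) ∘L P' ∘L T ∘L ι ∘L (Φ : X →L[ℂ] (LinearMap.range (P : X →ₗ[ℂ] X))) with hA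
  -- A belongs to the ideal
  have hAJ : A ∈ 𝓙 := by
    have : A = ((Φ.symm : (LinearMap.range (P : X →ₗ[ℂ] X)) →L[ℂ] X) ∘L P') * T * (ι ∘L (Φ : X →L[ℂ] (LinearMap.range (P : X →ₗ[ℂ] X)))) := by
      ext x; simp [hA, ContinuousLinearMap.mul_apply]
    rw [this]
    exact 𝓙.mul_mem_right _ _ (𝓙.mul_mem_left _ _ hTJ)
  -- A - 1 factors through T - P
  have hPfix : ∀ y : LinearMap.range (P : X →ₗ[ℂ] X), P (y : X) = (y : X) := by
    rintro ⟨y, z, rfl⟩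
    have := congrFun (congrArg DFunLike.coe hproj) z
    simpa using this
  have hfact : A - 1 = (Φ.symm : (LinearMap.range (P : X →ₗ[ℂ] X)) →L[ℂ] X) ∘L P' ∘L (T - P) ∘L ι ∘L (Φ : X →L[ℂ] (LinearMap.range (P : X →ₗ[ℂ] X))) := by
    ext x
    have h1 : P' (P (ι ((Φ : X →L[ℂ] (LinearMap.range (P : X →ₗ[ℂ] X))) x))) = (Φ : X →L[ℂ] (LinearMap.range (P : X →ₗ[ℂ] X))) x := by
      apply Subtype.ext
      simp only [hP', ContinuousLinearMap.coe_codRestrict_apply, hι,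
        Submodule.subtypeL_apply]
      rw [hPfix, hPfix]
    simp only [hA, ContinuousLinearMap.coe_comp', Function.comp_apply,
      ContinuousLinearMap.coe_sub', Pi.sub_apply, ContinuousLinearMap.one_apply,
      ContinuousLinearMap.map_sub]
    rw [h1]
    simp
  -- norm estimate
  have hnorm : ‖A - 1‖ < 1 := by
    rw [hfact]
    have b1 : ‖(Φ.symm : (LinearMap.range (P : X →ₗ[ℂ] X)) →L[ℂ] X) ∘L P' ∘L (T - P) ∘L ι ∘L (Φ : X →L[ℂ] (LinearMap.range (P : X →ₗ[ℂ] X)))‖ ≤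
        ‖(Φ.symm : (LinearMap.range (P : X →ₗ[ℂ] X)) →L[ℂ] X)‖ * (‖P'‖ * (‖T - P‖ * (‖ι‖ * ‖(Φ : X →L[ℂ] (LinearMap.range (P : X →ₗ[ℂ] X)))‖))) := by
      refine (ContinuousLinearMap.opNorm_comp_le _ _).trans ?_
      refine mul_le_mul_of_nonneg_left ?_ (norm_nonneg _)
      refine (ContinuousLinearMap.opNorm_comp_le _ _).trans ?_
      refine mul_le_mul_of_nonneg_left ?_ (norm_nonneg _)
      refine (ContinuousLinearMap.opNorm_comp_le _ _).trans ?_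
      refine mul_le_mul_of_nonneg_left ?_ (norm_nonneg _)
      exact ContinuousLinearMap.opNorm_comp_le _ _
    have h0f := norm_nonneg (Φ : X →L[ℂ] (LinearMap.range (P : X →ₗ[ℂ] X)))
    have h0s := norm_nonneg (Φ.symm : (LinearMap.range (P : X →ₗ[ℂ] X)) →L[ℂ] X)
    have h0t := norm_nonneg (T - P)
    have h0p := norm_nonneg P
    have h0p' := norm_nonneg P'
    have h0i := norm_nonneg ι
    have st1 : ‖ι‖ * ‖(Φ : X →L[ℂ] (LinearMap.range (P : X →ₗ[ℂ] X)))‖ ≤ ‖(Φ : X →L[ℂ] (LinearMap.range (P : X →ₗ[ℂ] X)))‖ := by nlinarith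
    have st2 : ‖T - P‖ * (‖ι‖ * ‖(Φ : X →L[ℂ] (LinearMap.range (P : X →ₗ[ℂ] X)))‖) ≤ ‖T - P‖ * ‖(Φ : X →L[ℂ] (LinearMap.range (P : X →ₗ[ℂ] X)))‖ :=
      mul_le_mul_of_nonneg_left st1 h0t
    have st3 : ‖P'‖ * (‖T - P‖ * (‖ι‖ * ‖(Φ : X →L[ℂ] (LinearMap.range (P : X →ₗ[ℂ] X)))‖)) ≤ ‖P‖ * (‖T - P‖ * ‖(Φ : X →L[ℂ] (LinearMap.range (P : X →ₗ[ℂ] X)))‖) :=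
      mul_le_mul hP'norm st2 (by positivity) h0p
    have st4 : ‖(Φ.symm : (LinearMap.range (P : X →ₗ[ℂ] X)) →L[ℂ] X)‖ * (‖P'‖ * (‖T - P‖ * (‖ι‖ * ‖(Φ : X →L[ℂ] (LinearMap.range (P : X →ₗ[ℂ] X)))‖))) ≤
        ‖(Φ.symm : (LinearMap.range (P : X →ₗ[ℂ] X)) →L[ℂ] X)‖ * (‖P‖ * (‖T - P‖ * ‖(Φ : X →L[ℂ] (LinearMap.range (P : X →ₗ[ℂ] X)))‖)) :=
      mul_le_mul_of_nonneg_left st3 h0s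
    have st5 : ‖(Φ.symm : (LinearMap.range (P : X →ₗ[ℂ] X)) →L[ℂ] X)‖ * (‖P‖ * (‖T - P‖ * ‖(Φ : X →L[ℂ] (LinearMap.range (P : X →ₗ[ℂ] X)))‖)) ≤ C * ‖P‖ * ‖T - P‖ := by
      nlinarith [mul_le_mul_of_nonneg_right (mul_le_mul_of_nonneg_right hC h0p) h0t]
    have b3 : C * ‖P‖ * ‖T - P‖ < 1 := by
      have h := mul_lt_mul_of_pos_left hTP hCP
      rwa [mul_inv_cancel₀ hCP.ne'] at h
    linarith
  -- A is a unit, hence 1 ∈ 𝓙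
  have hunit : IsUnit A := by
    have : ‖1 - A‖ < 1 := by rwa [norm_sub_rev]
    have := (Units.oneSub (1 - A) this).isUnit
    simpa using this
  obtain ⟨u, hu⟩ := hunit
  have h1 : (1 : X →L[ℂ] X) ∈ 𝓙 := by
    have := 𝓙.mul_mem_left (↑u⁻¹) A hAJ
    rwa [← hu, Units.inv_mul] at this
  exact 𝓙.eq_top h1
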